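/- Let D < 0 with D ≡ 0 or 1 mod 4, let A be an SL₂(ℤ)-equivalence class of integral binary quadratic forms of discriminant D, and let k ≥ 2. Then f_{k,D,A}(z) = π^{-k} Σ_{[a,b,c]∈A, a>0} (az²+bz+c)^{−k} converges absolutely on ℍ minus the CM points of A and satisfies f_{k,D,A}((pz+q)/(rz+s)) = (rz+s)^{2k} f_{k,D,A}(z) for all (p q; r s) ∈ SL₂(ℤ). -/

import Mathlib

open Complex Real Filter Topology BigOperators

noncomputable section

/-- The upper half-plane, as a subset of `ℂ`. -/
def UHP : Set ℂ := {z : ℂ | 0 < z.im}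

/-- `z` is a CM point of discriminant `D`: a root in the upper half-plane of an
integral quadratic `a X² + b X + c` with `a > 0` and `b² - 4ac = D`. -/
def IsCM (D : ℤ) (z : ℂ) : Prop :=
  0 < z.im ∧ ∃ a b c : ℤ, 0 < a ∧ b ^ 2 - 4 * a * c = D ∧ (a : ℂ) * z ^ 2 + b * z + c = 0

/-- Integral binary quadratic forms `(a, b, c)` of discriminant `D` with `a > 0`. -/
def QF (D : ℤ) : Set (ℤ × ℤ × ℤ) :=
  {Q | 0 < Q.1 ∧ Q.2.1 ^ 2 - 4 * Q.1 * Q.2.2 = D}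

/-- The quadratic polynomial `a z² + b z + c` attached to `Q = (a, b, c)`. -/
def qpoly (Q : ℤ × ℤ × ℤ) (z : ℂ) : ℂ := (Q.1 : ℂ) * z ^ 2 + (Q.2.1 : ℂ) * z + (Q.2.2 : ℂ)

/-- The series `f_{k,D}(z) = π⁻ᵏ Σ_{b²-4ac=D, a>0} (a z² + b z + c)⁻ᵏ`. -/
def fkD (k : ℕ) (D : ℤ) (z : ℂ) : ℂ :=
  (π : ℂ) ^ (-(k : ℤ)) * ∑' Q : QF D, qpoly Q.1 z ^ (-(k : ℤ))

/-- The Möbius action of `γ ∈ SL₂(ℤ)` on `ℂ`. -/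
def mob (γ : Matrix.SpecialLinearGroup (Fin 2) ℤ) (z : ℂ) : ℂ :=
  ((γ.1 0 0 : ℂ) * z + (γ.1 0 1 : ℂ)) / ((γ.1 1 0 : ℂ) * z + (γ.1 1 1 : ℂ))

/-- The action of `γ = (p q; r s) ∈ SL₂(ℤ)` on binary quadratic forms by change of
variables `Q'(x, y) = Q(p x + q y, r x + s y)`. -/
def actQF (γ : Matrix.SpecialLinearGroup (Fin 2) ℤ) (Q : ℤ × ℤ × ℤ) : ℤ × ℤ × ℤ :=
  (Q.1 * (γ.1 0 0) ^ 2 + Q.2.1 * (γ.1 0 0) * (γ.1 1 0) + Q.2.2 * (γ.1 1 0) ^ 2,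
   2 * Q.1 * (γ.1 0 0) * (γ.1 0 1) + Q.2.1 * ((γ.1 0 0) * (γ.1 1 1) + (γ.1 0 1) * (γ.1 1 0))
     + 2 * Q.2.2 * (γ.1 1 0) * (γ.1 1 1),
   Q.1 * (γ.1 0 1) ^ 2 + Q.2.1 * (γ.1 0 1) * (γ.1 1 1) + Q.2.2 * (γ.1 1 1) ^ 2)

/-- The series `f_{k,D,A}(z) = π⁻ᵏ Σ_{[a,b,c] ∈ A, a>0} (a z² + b z + c)⁻ᵏ`. -/
def fkDA (k : ℕ) (A : Set (ℤ × ℤ × ℤ)) (z : ℂ) : ℂ :=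
  (π : ℂ) ^ (-(k : ℤ)) * ∑' Q : {Q : ℤ × ℤ × ℤ // Q ∈ A ∧ 0 < Q.1}, qpoly Q.1 z ^ (-(k : ℤ))

/-- `z` is a CM point of the class `A`. -/
def IsCMA (A : Set (ℤ × ℤ × ℤ)) (z : ℂ) : Prop :=
  0 < z.im ∧ ∃ Q ∈ A, 0 < Q.1 ∧ qpoly Q z = 0

/-! ### Auxiliary material -/

abbrev SL2' := Matrix.SpecialLinearGroup (Fin 2) ℤ

lemma det_eq' (γ : SL2') : γ.1 0 0 * γ.1 1 1 - γ.1 0 1 * γ.1 1 0 = 1 := by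
  have := γ.2
  rwa [Matrix.det_fin_two] at this

lemma actQF_mul (γ γ' : SL2') (Q : ℤ × ℤ × ℤ) :
    actQF γ' (actQF γ Q) = actQF (γ * γ') Q := by
  have h : (γ * γ').1 = γ.1 * γ'.1 := rfl
  simp only [actQF, h, Matrix.mul_apply, Fin.sum_univ_two]
  refine Prod.ext ?_ (Prod.ext ?_ ?_) <;> ring

lemma actQF_one (Q : ℤ × ℤ × ℤ) : actQF 1 Q = Q := by
  have h : (1 : SL2').1 = (1 : Matrix (Fin 2) (Fin 2) ℤ) := rfl
  simp [actQF, h, Matrix.one_apply]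

lemma disc_actQF (γ : SL2') (Q : ℤ × ℤ × ℤ) :
    (actQF γ Q).2.1 ^ 2 - 4 * (actQF γ Q).1 * (actQF γ Q).2.2
      = Q.2.1 ^ 2 - 4 * Q.1 * Q.2.2 := by
  have hd := det_eq' γ
  simp only [actQF]
  linear_combination ((Q.2.1 ^ 2 - 4 * Q.1 * Q.2.2) *
    (γ.1 0 0 * γ.1 1 1 - γ.1 0 1 * γ.1 1 0 + 1)) * hd

lemma actQF_fst_pos {D : ℤ} (hD : D < 0) (γ : SL2') (Q : ℤ × ℤ × ℤ)
    (ha : 0 < Q.1) (hdisc : Q.2.1 ^ 2 - 4 * Q.1 * Q.2.2 = D) :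
    0 < (actQF γ Q).1 := by
  have hd := det_eq' γ
  have key : 0 < 4 * Q.1 * (actQF γ Q).1 := by
    have h1 : 4 * Q.1 * (actQF γ Q).1
        = (2 * Q.1 * γ.1 0 0 + Q.2.1 * γ.1 1 0) ^ 2 - D * (γ.1 1 0) ^ 2 := by
      simp only [actQF]; linear_combination (- ((γ.1 1 0)^2)) * hdisc
    rcases eq_or_ne (γ.1 1 0) 0 with h | h
    · have hp : γ.1 0 0 ≠ 0 := by
        intro h0; rw [h, h0] at hd; simp at hd
      have h2 : 2 * Q.1 * γ.1 0 0 ≠ 0 := by positivity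
      have h3 : 0 < (2 * Q.1 * γ.1 0 0) ^ 2 := by positivity
      rw [h1, h]; nlinarith
    · have h3 : 0 < (γ.1 1 0) ^ 2 := by positivity
      rw [h1]
      nlinarith [sq_nonneg (2 * Q.1 * γ.1 0 0 + Q.2.1 * γ.1 1 0),
        mul_pos (neg_pos.mpr hD) h3]
  nlinarith

lemma denom_ne_zero (γ : SL2') {z : ℂ} (hz : 0 < z.im) :
    (γ.1 1 0 : ℂ) * z + (γ.1 1 1 : ℂ) ≠ 0 := by
  intro h
  rcases eq_or_ne (γ.1 1 0) 0 with hr | hr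
  · have hd := det_eq' γ
    rw [hr] at hd h
    simp only [Int.cast_zero, zero_mul, zero_add] at h
    have : (γ.1 1 1 : ℤ) = 0 := by exact_mod_cast h
    rw [this] at hd; simp at hd
  · have him : ((γ.1 1 0 : ℂ) * z + (γ.1 1 1 : ℂ)).im = (γ.1 1 0 : ℝ) * z.im := by
      simp [Complex.add_im, Complex.mul_im]
    rw [h] at him
    have : (γ.1 1 0 : ℝ) * z.im = 0 := by simpa using him.symm
    rcases mul_eq_zero.mp this with h' | h'
    · exact hr (by exact_mod_cast h')
    · exact hz.ne' h'

lemma qpoly_actQF (γ : SL2') (Q : ℤ × ℤ × ℤ) {z : ℂ} (hz : 0 < z.im) :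
    qpoly Q (mob γ z) = qpoly (actQF γ Q) z / ((γ.1 1 0 : ℂ) * z + (γ.1 1 1 : ℂ)) ^ 2 := by
  have hβ := denom_ne_zero γ hz
  simp only [qpoly, mob, actQF]
  push_cast
  have e : ∀ x y : ℂ, y ≠ 0 → (Q.1:ℂ) * (x / y) ^ 2 + (Q.2.1:ℂ) * (x / y) + (Q.2.2:ℂ)
      = ((Q.1:ℂ) * x ^ 2 + (Q.2.1:ℂ) * x * y + (Q.2.2:ℂ) * y ^ 2) / y ^ 2 := by
    intro x y hy
    field_simp
  rw [e _ _ hβ]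
  congr 1
  ring

lemma mob_im (γ : SL2') {z : ℂ} (hz : 0 < z.im) :
    (mob γ z).im = z.im / Complex.normSq ((γ.1 1 0 : ℂ) * z + (γ.1 1 1 : ℂ)) := by
  have hd := det_eq' γ
  have hdR : (γ.1 0 0 : ℝ) * (γ.1 1 1 : ℝ) - (γ.1 0 1 : ℝ) * (γ.1 1 0 : ℝ) = 1 := by
    exact_mod_cast congrArg (Int.cast : ℤ → ℝ) hd
  have key : ((γ.1 0 0 : ℂ) * z + (γ.1 0 1 : ℂ)).im * ((γ.1 1 0 : ℂ) * z + (γ.1 1 1 : ℂ)).re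
      - ((γ.1 0 0 : ℂ) * z + (γ.1 0 1 : ℂ)).re * ((γ.1 1 0 : ℂ) * z + (γ.1 1 1 : ℂ)).im
      = z.im := by
    simp only [Complex.add_im, Complex.add_re, Complex.mul_im, Complex.mul_re,
      Complex.intCast_re, Complex.intCast_im]
    linear_combination z.im * hdR
  rw [mob, Complex.div_im, div_sub_div_same, key]

lemma mob_im_pos (γ : SL2') {z : ℂ} (hz : 0 < z.im) : 0 < (mob γ z).im := by
  rw [mob_im γ hz]
  have h := denom_ne_zero γ hz
  have : 0 < Complex.normSq ((γ.1 1 0 : ℂ) * z + (γ.1 1 1 : ℂ)) := by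
    rwa [Complex.normSq_pos]
  positivity

lemma zpow_div_sq (X β : ℂ) (k : ℕ) :
    (X / β ^ 2) ^ (-(k : ℤ)) = β ^ (2 * k) * X ^ (-(k : ℤ)) := by
  rw [div_zpow, div_eq_mul_inv, ← zpow_neg, neg_neg, ← zpow_natCast β (2 * k)]
  rw [← zpow_natCast β 2, ← zpow_mul]
  push_cast
  ring_nf

/-- the CM point of a positive definite form -/
def cmPt (D : ℤ) (Q : ℤ × ℤ × ℤ) : ℂ :=
  (-(Q.2.1 : ℂ) + (Real.sqrt (-D) : ℝ) * Complex.I) / (2 * (Q.1 : ℂ))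

def cmPt' (D : ℤ) (Q : ℤ × ℤ × ℤ) : ℂ :=
  (-(Q.2.1 : ℂ) - (Real.sqrt (-D) : ℝ) * Complex.I) / (2 * (Q.1 : ℂ))

lemma sqrtD_sq {D : ℤ} (hD : D < 0) : (Real.sqrt (-D)) ^ 2 = -(D:ℝ) := by
  have h : (D:ℝ) < 0 := by exact_mod_cast hD
  rw [Real.sq_sqrt (by linarith)]

lemma qpoly_factor {D : ℤ} (hD : D < 0) {Q : ℤ × ℤ × ℤ} (hQ : Q ∈ QF D) (w : ℂ) :
    qpoly Q w = (Q.1 : ℂ) * (w - cmPt D Q) * (w - cmPt' D Q) := by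
  have ha : (Q.1 : ℂ) ≠ 0 := by
    exact_mod_cast (Int.cast_ne_zero (α := ℂ)).mpr hQ.1.ne'
  have hs : ((Real.sqrt (-D) : ℝ) : ℂ) ^ 2 = -(D : ℂ) := by
    rw [← Complex.ofReal_pow, sqrtD_sq hD]; push_cast; ring
  have hdisc : ((Q.2.1 : ℂ)) ^ 2 - 4 * Q.1 * Q.2.2 = (D : ℂ) := by
    exact_mod_cast congrArg (Int.cast : ℤ → ℂ) hQ.2
  have e1 : cmPt D Q + cmPt' D Q = -(Q.2.1:ℂ) / Q.1 := by
    rw [cmPt, cmPt']; field_simp; ring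
  have e2 : cmPt D Q * cmPt' D Q = (Q.2.2:ℂ) / Q.1 := by
    rw [cmPt, cmPt', div_mul_div_comm, div_eq_div_iff (by simp [ha]) ha]
    linear_combination (-(Q.1:ℂ) * Complex.I ^ 2) * hs + ((Q.1:ℂ) * (D:ℂ)) * Complex.I_sq
      + (Q.1:ℂ) * hdisc
  have e3 : (Q.1 : ℂ) * (w - cmPt D Q) * (w - cmPt' D Q) = (Q.1:ℂ) * w ^ 2
      - (Q.1:ℂ) * (cmPt D Q + cmPt' D Q) * w + (Q.1:ℂ) * (cmPt D Q * cmPt' D Q) := by ring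
  rw [qpoly, e3, e1, e2]
  field_simp
  ring

lemma cmPt_im {D : ℤ} {Q : ℤ × ℤ × ℤ} (hQ : 0 < Q.1) :
    (cmPt D Q).im = Real.sqrt (-D) / (2 * Q.1) := by
  rw [cmPt, show (2 * (Q.1 : ℂ)) = ((2 * (Q.1 : ℝ) : ℝ) : ℂ) by push_cast; ring,
    Complex.div_ofReal_im]
  simp

lemma cmPt'_im {D : ℤ} {Q : ℤ × ℤ × ℤ} (hQ : 0 < Q.1) :
    (cmPt' D Q).im = -(Real.sqrt (-D) / (2 * Q.1)) := by
  rw [cmPt', show (2 * (Q.1 : ℂ)) = ((2 * (Q.1 : ℝ) : ℝ) : ℂ) by push_cast; ring,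
    Complex.div_ofReal_im]
  simp
  ring

lemma norm_qpoly_lower {D : ℤ} (hD : D < 0) {Q : ℤ × ℤ × ℤ} (hQ : Q ∈ QF D) {w : ℂ}
    (hw : 0 ≤ w.im) :
    (Q.1 : ℝ) * (Real.sqrt (-D) / (2 * Q.1)) * ‖w - cmPt D Q‖ ≤ ‖qpoly Q w‖ := by
  have haR : (0:ℝ) < (Q.1 : ℝ) := by exact_mod_cast hQ.1
  have hspos : 0 < Real.sqrt (-D) := by
    apply Real.sqrt_pos.mpr
    have : (D:ℝ) < 0 := by exact_mod_cast hD
    linarith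
  have hy₀ : 0 < Real.sqrt (-D) / (2 * Q.1) := by positivity
  have h1 : Real.sqrt (-D) / (2 * Q.1) ≤ ‖w - cmPt' D Q‖ := by
    have h2 := Complex.abs_im_le_norm (w - cmPt' D Q)
    have h3 : (w - cmPt' D Q).im = w.im + Real.sqrt (-D) / (2 * Q.1) := by
      rw [Complex.sub_im, cmPt'_im hQ.1]; ring
    calc Real.sqrt (-D) / (2 * Q.1) ≤ (w - cmPt' D Q).im := by rw [h3]; linarith
      _ ≤ |(w - cmPt' D Q).im| := le_abs_self _
      _ ≤ ‖w - cmPt' D Q‖ := h2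
  rw [qpoly_factor hD hQ w, norm_mul, norm_mul]
  have hna : ‖(Q.1 : ℂ)‖ = (Q.1 : ℝ) := by
    rw [Complex.norm_intCast]
    exact abs_of_pos haR
  rw [hna]
  calc (Q.1 : ℝ) * (Real.sqrt (-D) / (2 * Q.1)) * ‖w - cmPt D Q‖
      = ((Q.1:ℝ) * ‖w - cmPt D Q‖) * (Real.sqrt (-D) / (2 * Q.1)) := by ring
    _ ≤ ((Q.1:ℝ) * ‖w - cmPt D Q‖) * ‖w - cmPt' D Q‖ :=
        mul_le_mul_of_nonneg_left h1 (by positivity)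
    _ = (Q.1:ℝ) * ‖w - cmPt D Q‖ * ‖w - cmPt' D Q‖ := by ring

lemma zpow_negk_mono {x y : ℝ} (hx : 0 < x) (hxy : x ≤ y) (k : ℕ) :
    y ^ (-(k : ℤ)) ≤ x ^ (-(k : ℤ)) := by
  rw [zpow_neg, zpow_neg, zpow_natCast, zpow_natCast]
  exact inv_anti₀ (pow_pos hx k) (pow_le_pow_left₀ hx.le hxy k)

lemma summable_g {δ : ℝ} (hδ : 0 < δ) {k : ℕ} (hk : 2 ≤ k) :
    Summable (fun j : ℤ => (max δ (|(j : ℝ)| - 1)) ^ (-(k : ℤ))) := by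
  have hbase : Summable (fun j : ℤ => (2:ℝ)^k * (1 / (j:ℝ)^2)) :=
    (summable_one_div_int_pow.mpr one_lt_two).mul_left _
  apply Summable.of_norm_bounded_eventually hbase
  have hsub : {j : ℤ | ¬ ‖(max δ (|(j : ℝ)| - 1)) ^ (-(k : ℤ))‖ ≤ (2:ℝ)^k * (1 / (j:ℝ)^2)}
      ⊆ {-1, 0, 1} := by
    intro j hj
    by_contra hj'
    apply hj
    have h2' : (2:ℤ) ≤ |j| := by
      simp only [Set.mem_insert_iff, Set.mem_singleton_iff] at hj'
      push_neg at hj'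
      obtain ⟨u1, u2, u3⟩ := hj'
      rcases le_or_gt 0 j with h | h
      · rw [abs_of_nonneg h]; omega
      · rw [abs_of_neg h]; omega
    have h2 : (2:ℝ) ≤ |(j:ℝ)| := by
      calc (2:ℝ) = ((2:ℤ):ℝ) := by norm_num
      _ ≤ ((|j| : ℤ) : ℝ) := by exact_mod_cast h2'
      _ = |(j:ℝ)| := by push_cast; ring
    have hmaxpos : 0 < max δ (|(j : ℝ)| - 1) := lt_max_of_lt_left hδ
    rw [Real.norm_of_nonneg (by positivity)]
    have h3 : |(j:ℝ)| / 2 ≤ max δ (|(j : ℝ)| - 1) := le_max_of_le_right (by linarith)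
    calc (max δ (|(j : ℝ)| - 1)) ^ (-(k : ℤ)) ≤ (|(j:ℝ)|/2) ^ (-(k : ℤ)) :=
          zpow_negk_mono (by linarith) h3 k
      _ ≤ (|(j:ℝ)|/2) ^ (-(2 : ℤ)) := by
          apply zpow_le_zpow_right₀ (by linarith)
          omega
      _ ≤ (2:ℝ)^k * (1 / (j:ℝ)^2) := by
          have hj0 : (j:ℝ) ≠ 0 := by
            intro h0; rw [h0] at h2; simp at h2; linarith
          rw [zpow_neg, show ((2:ℤ)) = ((2:ℕ):ℤ) from rfl, zpow_natCast, div_pow,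
            _root_.sq_abs, inv_div]
          calc (2:ℝ)^2/(j:ℝ)^2 = 2^2 * ((j:ℝ)^2)⁻¹ := div_eq_mul_inv _ _
            _ ≤ 2^k * ((j:ℝ)^2)⁻¹ := by
                have h4 : (2:ℝ)^2 ≤ 2^k := pow_le_pow_right₀ one_le_two hk
                gcongr
            _ = 2^k * (1/(j:ℝ)^2) := by rw [one_div]
  exact (Set.Finite.subset (by norm_num : ({-1, 0, 1} : Set ℤ).Finite) hsub)

lemma abs_le_of_sq_le {t C : ℝ} (h : t ^ 2 ≤ C) : |t| ≤ C + 1 := by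
  rcases le_or_gt (|t|) 1 with h1 | h1
  · nlinarith [sq_nonneg t]
  · nlinarith [_root_.sq_abs t, le_of_lt h1]

/-- The set of `γ : SL2'` with all entries bounded is finite. -/
lemma sl2_bounded_finite (C : ℝ) :
    {γ : SL2' | ∀ i j, (|γ.1 i j| : ℝ) ≤ C}.Finite := by
  set N : ℤ := ⌈C⌉
  have hmat : {m : Matrix (Fin 2) (Fin 2) ℤ | ∀ i j, m i j ∈ Set.Icc (-N) N}.Finite := by
    have h := Set.Finite.pi (fun i : Fin 2 =>
      Set.Finite.pi (fun j : Fin 2 => Set.finite_Icc (-N) N))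
    apply h.subset
    intro m hm
    rw [Set.mem_univ_pi]
    intro i
    rw [Set.mem_univ_pi]
    intro j
    exact hm i j
  have hpre : {γ : SL2' | ∀ i j, (|γ.1 i j| : ℝ) ≤ C}
      ⊆ (fun γ : SL2' => γ.1) ⁻¹' {m | ∀ i j, m i j ∈ Set.Icc (-N) N} := by
    intro γ hγ i j
    have h1 : (|γ.1 i j| : ℝ) ≤ (N : ℝ) := le_trans (hγ i j) (Int.le_ceil C)
    have h2 : |γ.1 i j| ≤ N := by exact_mod_cast h1
    rw [Set.mem_Icc]
    exact abs_le.mp h2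
  exact Set.Finite.subset (Set.Finite.preimage
    (Set.injOn_of_injective (fun x y h => Subtype.ext h)) hmat) hpre

set_option maxHeartbeats 1000000 in
lemma cm_discrete {D : ℤ} (hD : D < 0) {Q₀ : ℤ × ℤ × ℤ} (hQ₀ : Q₀ ∈ QF D)
    {z : ℂ} (hz : 0 < z.im)
    (hne : ∀ γ : SL2', mob γ z ≠ cmPt D Q₀) :
    ∃ δ : ℝ, 0 < δ ∧ ∀ γ : SL2', δ ≤ ‖mob γ z - cmPt D Q₀‖ := by
  have haR : (0:ℝ) < (Q₀.1 : ℝ) := by exact_mod_cast hQ₀.1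
  have hspos : 0 < Real.sqrt (-D) := by
    apply Real.sqrt_pos.mpr
    have : (D:ℝ) < 0 := by exact_mod_cast hD
    linarith
  set w₀ : ℂ := cmPt D Q₀ with hw₀
  set y₀ : ℝ := Real.sqrt (-D) / (2 * (Q₀.1:ℝ)) with hy₀def
  have hy₀ : 0 < y₀ := by positivity
  have him : w₀.im = y₀ := cmPt_im hQ₀.1
  -- bounds
  set B1 : ℝ := 2 * z.im / y₀ with hB1
  have hB1pos : 0 < B1 := by positivity
  set C1 : ℝ := B1 / z.im ^ 2 + 1 with hC1
  set C2 : ℝ := (B1 + 1) + C1 * |z.re| with hC2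
  set B3 : ℝ := (‖w₀‖ + y₀/2) * (B1 + 1) with hB3
  have hB3nn : 0 ≤ B3 := by positivity
  set C3 : ℝ := B3 / z.im + 1 with hC3
  set C4 : ℝ := B3 + C3 * |z.re| with hC4
  have hC1nn : 0 ≤ C1 := by positivity
  have hC3nn : 0 ≤ C3 := by positivity
  set C : ℝ := C1 + C2 + C3 + C4 with hC
  have hC2nn : 0 ≤ C2 := by positivity
  have hC4nn : 0 ≤ C4 := by positivity
  have hCbound : ∀ γ : SL2', ‖mob γ z - w₀‖ ≤ y₀ / 2 → ∀ i j, (|γ.1 i j| : ℝ) ≤ C := by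
    intro γ hγ'
    have hβ : ((γ.1 1 0 : ℂ) * z + (γ.1 1 1 : ℂ)) ≠ 0 := denom_ne_zero γ hz
    set β : ℂ := (γ.1 1 0 : ℂ) * z + (γ.1 1 1 : ℂ) with hβdef
    set α : ℂ := (γ.1 0 0 : ℂ) * z + (γ.1 0 1 : ℂ) with hαdef
    have hnspos : 0 < Complex.normSq β := Complex.normSq_pos.mpr hβ
    set w : ℂ := mob γ z with hwdef
    have h1 : |w.im - y₀| ≤ y₀ / 2 := by
      have habs := Complex.abs_im_le_norm (w - w₀)
      have h2 : (w - w₀).im = w.im - y₀ := by rw [Complex.sub_im, him]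
      calc |w.im - y₀| = |(w - w₀).im| := by rw [h2]
        _ ≤ ‖w - w₀‖ := habs
        _ ≤ y₀/2 := hγ'
    have h2 : y₀ / 2 ≤ w.im := by linarith [(abs_le.mp h1).1]
    have h3 : w.im = z.im / Complex.normSq β := mob_im γ hz
    have h4 : Complex.normSq β ≤ B1 := by
      rw [hB1, le_div_iff₀ hy₀]
      rw [h3, le_div_iff₀ hnspos] at h2
      nlinarith
    have hβim : β.im = (γ.1 1 0 : ℝ) * z.im := by simp [hβdef]
    have hβre : β.re = (γ.1 1 0 : ℝ) * z.re + (γ.1 1 1 : ℝ) := by simp [hβdef]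
    have hns : Complex.normSq β = β.re ^ 2 + β.im ^ 2 := by
      rw [Complex.normSq_apply]; ring
    have hr2 : ((γ.1 1 0 : ℝ)) ^ 2 * z.im ^ 2 ≤ B1 := by
      rw [hns, hβim] at h4
      nlinarith [sq_nonneg β.re]
    have hrb : |(γ.1 1 0 : ℝ)| ≤ C1 := by
      rw [hC1]
      apply abs_le_of_sq_le
      rw [le_div_iff₀ (by positivity : (0:ℝ) < z.im ^ 2)]
      exact hr2
    have hβreb : |β.re| ≤ B1 + 1 := by
      apply abs_le_of_sq_le
      nlinarith [sq_nonneg β.im]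
    have hsb : |(γ.1 1 1 : ℝ)| ≤ C2 := by
      have e1 : (γ.1 1 1 : ℝ) = β.re - (γ.1 1 0 : ℝ) * z.re := by rw [hβre]; ring
      have e2 : |(γ.1 1 1 : ℝ)| ≤ |β.re| + |(γ.1 1 0 : ℝ)| * |z.re| := by
        rw [e1, ← abs_mul]
        exact abs_sub _ _
      have e3 : |(γ.1 1 0 : ℝ)| * |z.re| ≤ C1 * |z.re| :=
        mul_le_mul_of_nonneg_right hrb (abs_nonneg _)
      rw [hC2]; linarith
    have hwle : ‖w‖ ≤ ‖w₀‖ + y₀/2 := by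
      have e1 : w = (w - w₀) + w₀ := by ring
      calc ‖w‖ = ‖(w - w₀) + w₀‖ := by rw [← e1]
        _ ≤ ‖w - w₀‖ + ‖w₀‖ := norm_add_le _ _
        _ ≤ ‖w₀‖ + y₀/2 := by linarith
    have hβnorm : ‖β‖ ≤ B1 + 1 := by
      have h5 : ‖β‖ ^ 2 ≤ B1 := by rwa [← Complex.sq_norm] at h4
      have h6 := abs_le_of_sq_le h5
      rwa [_root_.abs_of_nonneg (norm_nonneg β)] at h6
    have hαβ : α = w * β := by
      rw [hwdef, mob, ← hβdef, ← hαdef, div_mul_cancel₀ _ hβ]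
    have hαnorm : ‖α‖ ≤ B3 := by
      rw [hαβ, norm_mul, hB3]
      exact mul_le_mul hwle hβnorm (norm_nonneg β) (by positivity)
    have hαim : α.im = (γ.1 0 0 : ℝ) * z.im := by simp [hαdef]
    have hαre : α.re = (γ.1 0 0 : ℝ) * z.re + (γ.1 0 1 : ℝ) := by simp [hαdef]
    have hpb : |(γ.1 0 0 : ℝ)| ≤ C3 := by
      have e1 : |α.im| ≤ B3 := le_trans (Complex.abs_im_le_norm α) hαnorm
      have e2 : |(γ.1 0 0 : ℝ)| * z.im ≤ B3 := by
        rw [← abs_of_pos hz, ← abs_mul, ← hαim]; exact e1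
      rw [hC3]
      have e3 : |(γ.1 0 0 : ℝ)| ≤ B3 / z.im := by
        rw [le_div_iff₀ hz]; exact e2
      linarith
    have hαreb : |α.re| ≤ B3 :=
      le_trans (Complex.abs_re_le_norm α) hαnorm
    have hqb : |(γ.1 0 1 : ℝ)| ≤ C4 := by
      have e1 : (γ.1 0 1 : ℝ) = α.re - (γ.1 0 0 : ℝ) * z.re := by rw [hαre]; ring
      have e2 : |(γ.1 0 1 : ℝ)| ≤ |α.re| + |(γ.1 0 0 : ℝ)| * |z.re| := by
        rw [e1, ← abs_mul]
        exact abs_sub _ _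
      have e3 : |(γ.1 0 0 : ℝ)| * |z.re| ≤ C3 * |z.re| :=
        mul_le_mul_of_nonneg_right hpb (abs_nonneg _)
      rw [hC4]; linarith
    intro i j
    fin_cases i <;> fin_cases j
    · exact le_trans hpb (by rw [hC]; linarith)
    · exact le_trans hqb (by rw [hC]; linarith)
    · exact le_trans hrb (by rw [hC]; linarith)
    · exact le_trans hsb (by rw [hC]; linarith)
  -- finiteness of S
  have hSfin : {γ : SL2' | ‖mob γ z - w₀‖ ≤ y₀ / 2}.Finite := by
    apply (sl2_bounded_finite C).subset
    intro γ hγ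
    exact hCbound γ hγ
  -- extract δ
  set V : Set ℝ := (fun γ : SL2' => ‖mob γ z - w₀‖) '' {γ : SL2' | ‖mob γ z - w₀‖ ≤ y₀ / 2}
    with hV
  have hVfin : V.Finite := hSfin.image _
  have hVpos : ∀ t ∈ V, 0 < t := by
    rintro t ⟨γ, hγ, rfl⟩
    rw [norm_pos_iff, sub_ne_zero]
    exact hne γ
  rcases eq_or_ne V ∅ with hVe | hVe
  · refine ⟨y₀/2, by positivity, fun γ => ?_⟩
    by_contra hlt
    push_neg at hlt
    have : ‖mob γ z - w₀‖ ∈ V := ⟨γ, le_of_lt hlt, rfl⟩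
    rw [hVe] at this
    exact this
  · have hVne : V.Nonempty := Set.nonempty_iff_ne_empty.mpr hVe
    have hVne' : hVfin.toFinset.Nonempty := by
      rwa [Set.Finite.toFinset_nonempty]
    set m := hVfin.toFinset.min' hVne' with hm
    have hmV : m ∈ V := by
      have := hVfin.toFinset.min'_mem hVne'
      rwa [Set.Finite.mem_toFinset] at this
    have hmpos : 0 < m := hVpos m hmV
    refine ⟨min (y₀/2) m, lt_min (by positivity) hmpos, fun γ => ?_⟩
    rcases le_or_gt (‖mob γ z - w₀‖) (y₀/2) with h | h
    · have : ‖mob γ z - w₀‖ ∈ hVfin.toFinset := by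
        rw [Set.Finite.mem_toFinset]
        exact ⟨γ, h, rfl⟩
      exact le_trans (min_le_right _ _) (hVfin.toFinset.min'_le _ this)
    · exact le_trans (min_le_left _ _) (le_of_lt h)

def Cop : Type := {v : ℤ × ℤ // IsCoprime v.1 v.2}

/-- first choice coefficient : `pC v * r + qC v * s = 1` -/
def pC (v : Cop) : ℤ := Classical.choose v.2
def qC (v : Cop) : ℤ := Classical.choose (Classical.choose_spec v.2)
lemma pqC_spec (v : Cop) : pC v * v.1.1 + qC v * v.1.2 = 1 :=
  Classical.choose_spec (Classical.choose_spec v.2)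

def EE (p : Cop × ℤ) : SL2' :=
  ⟨!![qC p.1 + p.2 * p.1.1.1, -pC p.1 + p.2 * p.1.1.2; p.1.1.1, p.1.1.2], by
    rw [Matrix.det_fin_two_of]
    have := pqC_spec p.1
    ring_nf
    linarith⟩

@[simp] lemma EE_00 (p : Cop × ℤ) : (EE p).1 0 0 = qC p.1 + p.2 * p.1.1.1 := rfl
@[simp] lemma EE_01 (p : Cop × ℤ) : (EE p).1 0 1 = -pC p.1 + p.2 * p.1.1.2 := rfl
@[simp] lemma EE_10 (p : Cop × ℤ) : (EE p).1 1 0 = p.1.1.1 := rfl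
@[simp] lemma EE_11 (p : Cop × ℤ) : (EE p).1 1 1 = p.1.1.2 := rfl

lemma EE_bij : Function.Bijective EE := by
  constructor
  · rintro ⟨v, n⟩ ⟨v', n'⟩ h
    have h10 : (EE (v,n)).1 1 0 = (EE (v',n')).1 1 0 := by rw [h]
    have h11 : (EE (v,n)).1 1 1 = (EE (v',n')).1 1 1 := by rw [h]
    simp only [EE_10, EE_11] at h10 h11
    have hv : v = v' := Subtype.ext (Prod.ext h10 h11)
    subst hv
    have h00 : (EE (v,n)).1 0 0 = (EE (v,n')).1 0 0 := by rw [h]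
    have h01 : (EE (v,n)).1 0 1 = (EE (v,n')).1 0 1 := by rw [h]
    simp only [EE_00, EE_01] at h00 h01
    have hrs : v.1.1 ≠ 0 ∨ v.1.2 ≠ 0 := by
      by_contra hc
      push_neg at hc
      have := pqC_spec v
      rw [hc.1, hc.2] at this
      simp at this
    have : n = n' := by
      rcases hrs with h' | h'
      · have : n * v.1.1 = n' * v.1.1 := by linarith
        exact mul_right_cancel₀ h' this
      · have : n * v.1.2 = n' * v.1.2 := by linarith
        exact mul_right_cancel₀ h' this
    rw [this]
  · intro γ
    have hdet := det_eq' γ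
    have cop : IsCoprime (γ.1 1 0) (γ.1 1 1) :=
      ⟨-γ.1 0 1, γ.1 0 0, by linarith⟩
    set v : Cop := ⟨(γ.1 1 0, γ.1 1 1), cop⟩ with hv
    have hab := pqC_spec v
    set a := pC v; set b := qC v
    set r := γ.1 1 0; set s := γ.1 1 1
    set d := γ.1 0 0 - b with hd
    set e := γ.1 0 1 + a with he
    have key : d * s = e * r := by
      simp only [hd, he]
      have : a * r + b * s = 1 := hab
      nlinarith [hdet, this]
    have hex : ∃ n : ℤ, d = n * r ∧ e = n * s := by
      rcases eq_or_ne r 0 with hr | hr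
      · have hs : s ∣ 1 := by
          refine ⟨b, ?_⟩
          have := hab
          rw [show v.1.1 = r from rfl] at this
          rw [hr] at this
          linarith
        have hs1 : s = 1 ∨ s = -1 := Int.isUnit_iff.mp (isUnit_of_dvd_one hs) |>.imp id id
        have hd0 : d = 0 := by
          rcases hs1 with h | h <;> [skip; skip] <;>
          · rw [hr] at key; simp at key; rcases key with k | k
            · exact k
            · rw [k] at h; omega
        refine ⟨e * s, ?_, ?_⟩
        · rw [hd0, hr]; ring
        · rcases hs1 with h | h <;> rw [h] <;> ring
      · have hdvd : r ∣ d := by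
          have : r ∣ d * s := ⟨e, by linarith⟩
          exact (IsCoprime.dvd_of_dvd_mul_right cop this)
        obtain ⟨n, hn⟩ := hdvd
        refine ⟨n, by rw [hn]; ring, ?_⟩
        have : r * (n * s) = r * e := by
          calc r * (n * s) = (r * n) * s := by ring
            _ = d * s := by rw [hn]
            _ = e * r := key
            _ = r * e := by ring
        have := mul_left_cancel₀ hr this
        rw [← this]
    obtain ⟨n, hn1, hn2⟩ := hex
    refine ⟨(v, n), ?_⟩
    apply Subtype.ext
    ext i j
    fin_cases i <;> fin_cases j
    · show qC v + n * v.1.1 = γ.1 0 0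
      have : v.1.1 = r := rfl
      rw [this]
      omega
    · show -pC v + n * v.1.2 = γ.1 0 1
      have : v.1.2 = s := rfl
      rw [this]
      omega
    · rfl
    · rfl

-- Eisenstein transfer
lemma summable_cop (k : ℕ) (hk : 2 ≤ k) {z : ℂ} (hz : 0 < z.im) :
    Summable (fun v : Cop => ‖(v.1.1 : ℂ) * z + (v.1.2 : ℂ)‖ ^ (-(2 * k : ℤ))) := by
  have h3 : (3 : ℤ) ≤ (2 * k : ℤ) := by omega
  have base := EisensteinSeries.summable_norm_eisSummand h3 ⟨z, hz⟩
  have base' : Summable (fun x : Fin 2 → ℤ => ‖(x 0 : ℂ) * z + (x 1 : ℂ)‖ ^ (-(2 * k : ℤ))) := by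
    apply base.congr
    intro x
    rw [EisensteinSeries.eisSummand, norm_zpow]
  have hinj : Function.Injective (fun v : Cop => (![v.1.1, v.1.2] : Fin 2 → ℤ)) := by
    intro v v' h
    have h0 := congrFun h 0
    have h1 := congrFun h 1
    simp only [Matrix.cons_val_zero, Matrix.cons_val_one, Matrix.head_cons] at h0 h1
    exact Subtype.ext (Prod.ext h0 h1)
  have := base'.comp_injective hinj
  exact this.congr (fun v => by simp)

lemma mob_EE (v : Cop) (n : ℤ) {z : ℂ} (hz : 0 < z.im) :
    mob (EE (v, n)) z = mob (EE (v, 0)) z + n := by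
  have hβ : (v.1.1 : ℂ) * z + (v.1.2 : ℂ) ≠ 0 := by
    have := denom_ne_zero (EE (v, 0)) hz
    rwa [EE_10, EE_11] at this
  simp only [mob, EE_00, EE_01, EE_10, EE_11]
  push_cast
  field_simp
  ring

set_option maxHeartbeats 1000000 in
lemma part1 {D : ℤ} (hD : D < 0) {Q₀ : ℤ × ℤ × ℤ} (hQ₀ : Q₀ ∈ QF D)
    {A : Set (ℤ × ℤ × ℤ)} (hAdef : A = {Q | ∃ γ : SL2', Q = actQF γ Q₀})
    {k : ℕ} (hk : 2 ≤ k) {z : ℂ} (hz : 0 < z.im) (hcm : ¬ IsCMA A z) :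
    Summable (fun Q : {Q : ℤ × ℤ × ℤ // Q ∈ A ∧ 0 < Q.1} => ‖qpoly Q.1 z ^ (-(k : ℤ))‖) := by
  have haR : (0:ℝ) < (Q₀.1 : ℝ) := by exact_mod_cast hQ₀.1
  have hspos : 0 < Real.sqrt (-D) := by
    apply Real.sqrt_pos.mpr
    have : (D:ℝ) < 0 := by exact_mod_cast hD
    linarith
  set y₀ : ℝ := Real.sqrt (-D) / (2 * (Q₀.1:ℝ)) with hy₀def
  have hy₀ : 0 < y₀ := by positivity
  set w₀ : ℂ := cmPt D Q₀ with hw₀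
  -- z is not in the orbit of w₀
  have hne : ∀ γ : SL2', mob γ z ≠ w₀ := by
    intro γ h
    apply hcm
    refine ⟨hz, actQF γ Q₀, hAdef ▸ ⟨γ, rfl⟩, actQF_fst_pos hD γ Q₀ hQ₀.1 hQ₀.2, ?_⟩
    have h1 := qpoly_actQF γ Q₀ hz
    rw [h, hw₀] at h1
    rw [qpoly_factor hD hQ₀ (cmPt D Q₀)] at h1
    simp only [sub_self, mul_zero, zero_mul] at h1
    have hβ := denom_ne_zero γ hz
    exact (div_eq_zero_iff.mp h1.symm).resolve_right (pow_ne_zero 2 hβ)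
  obtain ⟨δ, hδpos, hδ⟩ := cm_discrete hD hQ₀ hz hne
  -- the function on SL2'
  set H : SL2' → ℝ := fun γ => ‖qpoly (actQF γ Q₀) z ^ (-(k : ℤ))‖ with hH
  -- reduction to summability of H
  have hmain : Summable H → Summable
      (fun Q : {Q : ℤ × ℤ × ℤ // Q ∈ A ∧ 0 < Q.1} => ‖qpoly Q.1 z ^ (-(k : ℤ))‖) := by
    intro hsum
    have hψex : ∀ Q : {Q : ℤ × ℤ × ℤ // Q ∈ A ∧ 0 < Q.1}, ∃ γ : SL2', Q.1 = actQF γ Q₀ := by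
      intro Q
      exact hAdef ▸ Q.2.1
    set ψ : {Q : ℤ × ℤ × ℤ // Q ∈ A ∧ 0 < Q.1} → SL2' :=
      fun Q => Classical.choose (hψex Q) with hψ
    have hψspec : ∀ Q, Q.1 = actQF (ψ Q) Q₀ := fun Q => Classical.choose_spec (hψex Q)
    have hψinj : Function.Injective ψ := by
      intro Q Q' h
      apply Subtype.ext
      rw [hψspec Q, hψspec Q', h]
    have := hsum.comp_injective hψinj
    apply this.congr
    intro Q
    show H (ψ Q) = _
    rw [hH]
    simp only
    rw [← hψspec Q]
  apply hmain
  -- summability of H via the parametrization EE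
  rw [← (Equiv.ofBijective EE EE_bij).summable_iff]
  -- notation for the pieces
  set gfun : ℤ → ℝ := fun j => (max δ (|(j : ℝ)| - 1)) ^ (-(k : ℤ)) with hgfun
  set mI : Cop → ℤ := fun v => round (-(mob (EE (v, 0)) z - w₀).re) with hmI
  set K : ℝ := ((Q₀.1 : ℝ) * y₀) ^ (-(k : ℤ)) with hK
  have hKpos : 0 < K := by
    rw [hK]
    apply zpow_pos (by positivity)
  set G : Cop × ℤ → ℝ := fun p =>
    (K * ‖(p.1.1.1 : ℂ) * z + (p.1.1.2 : ℂ)‖ ^ (-(2 * k : ℤ))) * gfun (p.2 - mI p.1) with hG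
  have hβne : ∀ v : Cop, (v.1.1 : ℂ) * z + (v.1.2 : ℂ) ≠ 0 := by
    intro v
    have := denom_ne_zero (EE (v, 0)) hz
    rwa [EE_10, EE_11] at this
  have hgpos : ∀ j : ℤ, 0 < gfun j := by
    intro j
    rw [hgfun]
    exact zpow_pos (lt_max_of_lt_left hδpos) _
  -- the key bound
  have hbound : ∀ p : Cop × ℤ, H (EE p) ≤ G p := by
    rintro ⟨v, n⟩
    set β : ℂ := (v.1.1 : ℂ) * z + (v.1.2 : ℂ) with hβdef
    have hβ : β ≠ 0 := hβne v
    have hβn : 0 < ‖β‖ := norm_pos_iff.mpr hβ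
    set w : ℂ := mob (EE (v, n)) z with hwdef
    have hwim : 0 < w.im := mob_im_pos _ hz
    -- H value
    have hq : qpoly (actQF (EE (v, n)) Q₀) z = qpoly Q₀ w * β ^ 2 := by
      have h1 := qpoly_actQF (EE (v, n)) Q₀ hz
      rw [EE_10, EE_11] at h1
      rw [← hwdef, ← hβdef] at h1
      rw [h1, div_mul_cancel₀]
      exact pow_ne_zero 2 hβ
    have hHval : H (EE (v, n)) = ‖qpoly Q₀ w‖ ^ (-(k:ℤ)) * (‖β‖^2) ^ (-(k:ℤ)) := by
      rw [hH]
      simp only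
      rw [norm_zpow, hq, norm_mul, mul_zpow, norm_pow]
    -- lower bound for ‖qpoly Q₀ w‖
    have hlow1 : δ ≤ ‖w - w₀‖ := hδ _
    have hlow2 : |((n - mI v : ℤ) : ℝ)| - 1 ≤ ‖w - w₀‖ := by
      have hre : (w - w₀).re = ((mob (EE (v,0)) z - w₀).re + n) := by
        rw [hwdef, mob_EE v n hz]
        simp [Complex.add_re, Complex.sub_re]
        ring
      have h1 : |(w - w₀).re| ≤ ‖w - w₀‖ := by
        exact Complex.abs_re_le_norm (w - w₀)
      set τ : ℝ := (mob (EE (v,0)) z - w₀).re with hτ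
      have h2 := abs_sub_round (-τ)
      have h3 : |((n - mI v : ℤ) : ℝ)| ≤ |τ + n| + 1/2 := by
        have e : ((n - mI v : ℤ) : ℝ) = (τ + n) + (-τ - mI v) := by
          push_cast
          ring
        calc |((n - mI v : ℤ) : ℝ)| ≤ |τ + n| + |-τ - (mI v : ℝ)| := by
              rw [e]; exact abs_add_le _ _
          _ ≤ |τ + n| + 1/2 := by
              have hmIv : mI v = round (-τ) := rfl
              have : |-τ - (mI v : ℝ)| ≤ 1/2 := by
                rw [hmIv]
                exact h2
              linarith
      rw [hre] at h1
      linarith [h3, h1]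
    have hmax : max δ (|((n - mI v : ℤ) : ℝ)| - 1) ≤ ‖w - w₀‖ := max_le hlow1 hlow2
    have hmaxpos : 0 < max δ (|((n - mI v : ℤ) : ℝ)| - 1) := lt_max_of_lt_left hδpos
    have hlow : (Q₀.1 : ℝ) * y₀ * max δ (|((n - mI v : ℤ) : ℝ)| - 1) ≤ ‖qpoly Q₀ w‖ := by
      calc (Q₀.1 : ℝ) * y₀ * max δ (|((n - mI v : ℤ) : ℝ)| - 1)
          ≤ (Q₀.1 : ℝ) * y₀ * ‖w - w₀‖ := by
            apply mul_le_mul_of_nonneg_left hmax (by positivity)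
        _ ≤ ‖qpoly Q₀ w‖ := norm_qpoly_lower hD hQ₀ (le_of_lt hwim)
    -- combine
    rw [hHval, hG]
    simp only
    have step1 : ‖qpoly Q₀ w‖ ^ (-(k:ℤ))
        ≤ ((Q₀.1 : ℝ) * y₀ * max δ (|((n - mI v : ℤ) : ℝ)| - 1)) ^ (-(k:ℤ)) :=
      zpow_negk_mono (by positivity) hlow k
    have step2 : ((Q₀.1 : ℝ) * y₀ * max δ (|((n - mI v : ℤ) : ℝ)| - 1)) ^ (-(k:ℤ))
        = K * gfun (n - mI v) := by
      rw [mul_zpow, hK, hgfun]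
    have step3 : (‖β‖^2) ^ (-(k:ℤ)) = ‖β‖ ^ (-(2 * k : ℤ)) := by
      rw [← zpow_natCast ‖β‖ 2, ← zpow_mul]
      congr 1
      push_cast
      ring
    calc ‖qpoly Q₀ w‖ ^ (-(k:ℤ)) * (‖β‖^2) ^ (-(k:ℤ))
        ≤ (K * gfun (n - mI v)) * (‖β‖^2) ^ (-(k:ℤ)) := by
          apply mul_le_mul_of_nonneg_right _ (by positivity)
          rw [← step2]; exact step1
      _ = (K * ‖β‖ ^ (-(2 * k : ℤ))) * gfun (n - mI v) := by rw [step3]; ring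
  -- summability of G
  have hGsum : Summable G := by
    rw [hG]
    apply (summable_prod_of_nonneg ?_).mpr
    constructor
    · intro v
      have h1 : Summable (fun n : ℤ => gfun (n - mI v)) := by
        have h2 := ((Equiv.subRight (mI v)).summable_iff).mpr (summable_g hδpos hk)
        apply h2.congr
        intro n
        simp [Equiv.subRight, hgfun]
      show Summable fun n : ℤ =>
        K * ‖(v.1.1 : ℂ) * z + (v.1.2 : ℂ)‖ ^ (-(2 * k : ℤ)) * gfun (n - mI v)
      simp only [mul_assoc]
      exact (h1.mul_left _).mul_left _
    · have hts : ∀ v : Cop, (∑' n : ℤ, (K * ‖(v.1.1 : ℂ) * z + (v.1.2 : ℂ)‖ ^ (-(2 * k : ℤ)))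
          * gfun (n - mI v))
          = (K * (∑' j : ℤ, gfun j)) * ‖(v.1.1 : ℂ) * z + (v.1.2 : ℂ)‖ ^ (-(2 * k : ℤ)) := by
        intro v
        rw [tsum_mul_left]
        rw [show (∑' n : ℤ, gfun (n - mI v)) = ∑' j : ℤ, gfun j from
          (Equiv.subRight (mI v)).tsum_eq gfun]
        ring
      apply Summable.congr _ (fun v => (hts v).symm)
      exact (summable_cop k hk hz).mul_left _
    · rintro ⟨v, n⟩
      simp only
      positivity
  exact Summable.of_nonneg_of_le (fun p => norm_nonneg _) hbound hGsum

section part2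
variable {D : ℤ} (hD : D < 0) {A : Set (ℤ × ℤ × ℤ)} {Q₀ : ℤ × ℤ × ℤ}
  (hQ₀ : Q₀ ∈ QF D)
  (hAdef : A = {Q | ∃ γ : SL2', Q = actQF γ Q₀})

include hAdef in
lemma mem_act {Q : ℤ × ℤ × ℤ} (hQ : Q ∈ A) (γ : SL2') : actQF γ Q ∈ A := by
  obtain ⟨δ, rfl⟩ := hAdef ▸ hQ
  rw [hAdef]
  exact ⟨δ * γ, actQF_mul δ γ Q₀⟩

include hQ₀ hAdef in
lemma disc_of_mem {Q : ℤ × ℤ × ℤ} (hQ : Q ∈ A) : Q.2.1 ^ 2 - 4 * Q.1 * Q.2.2 = D := by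
  obtain ⟨δ, rfl⟩ := hAdef ▸ hQ
  rw [disc_actQF]
  exact hQ₀.2

include hD hQ₀ hAdef in
lemma pos_of_mem {Q : ℤ × ℤ × ℤ} (hQ : Q ∈ A) : 0 < Q.1 := by
  obtain ⟨δ, rfl⟩ := hAdef ▸ hQ
  exact actQF_fst_pos hD δ Q₀ hQ₀.1 hQ₀.2

/-- reindexing equivalence -/
def eAct (hD : D < 0) (hQ₀ : Q₀ ∈ QF D) (hAdef : A = {Q | ∃ γ : SL2', Q = actQF γ Q₀})
    (γ : SL2') : {Q : ℤ × ℤ × ℤ // Q ∈ A ∧ 0 < Q.1} ≃ {Q : ℤ × ℤ × ℤ // Q ∈ A ∧ 0 < Q.1} where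
  toFun Q := ⟨actQF γ Q.1, mem_act hAdef Q.2.1 γ,
    actQF_fst_pos hD γ Q.1 Q.2.2 (disc_of_mem hQ₀ hAdef Q.2.1)⟩
  invFun Q := ⟨actQF γ⁻¹ Q.1, mem_act hAdef Q.2.1 γ⁻¹,
    actQF_fst_pos hD γ⁻¹ Q.1 Q.2.2 (disc_of_mem hQ₀ hAdef Q.2.1)⟩
  left_inv Q := by
    ext1
    simp only [actQF_mul, mul_inv_cancel, actQF_one]
  right_inv Q := by
    ext1
    simp only [actQF_mul, inv_mul_cancel, actQF_one]

include hD hQ₀ hAdef in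
lemma part2 (k : ℕ) (γ : SL2') (z : ℂ) (hz : 0 < z.im) :
    fkDA k A (mob γ z) = ((γ.1 1 0 : ℂ) * z + (γ.1 1 1 : ℂ)) ^ (2 * k) * fkDA k A z := by
  set β : ℂ := (γ.1 1 0 : ℂ) * z + (γ.1 1 1 : ℂ)
  have key : ∀ Q : {Q : ℤ × ℤ × ℤ // Q ∈ A ∧ 0 < Q.1},
      qpoly Q.1 (mob γ z) ^ (-(k : ℤ))
        = β ^ (2 * k) * qpoly ((eAct hD hQ₀ hAdef γ) Q).1 z ^ (-(k : ℤ)) := by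
    intro Q
    rw [qpoly_actQF γ Q.1 hz, zpow_div_sq]
    rfl
  unfold fkDA
  rw [tsum_congr key, tsum_mul_left, ((eAct hD hQ₀ hAdef γ)).tsum_eq
    (fun Q : {Q : ℤ × ℤ × ℤ // Q ∈ A ∧ 0 < Q.1} => qpoly Q.1 z ^ (-(k : ℤ)))]
  ring

end part2

/-- For an `SL₂(ℤ)`-equivalence class `A` of integral binary quadratic
forms of discriminant `D < 0`, the series `f_{k,D,A}` converges absolutely away from the
CM points of `A` and transforms modularly of weight `2k`. -/
theorem stmt3 (k : ℕ) (hk : 2 ≤ k) (D : ℤ) (hD : D < 0)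
    (hDcong : D % 4 = 0 ∨ D % 4 = 1)
    (A : Set (ℤ × ℤ × ℤ))
    (hA : ∃ Q₀ ∈ QF D, A = {Q | ∃ γ : Matrix.SpecialLinearGroup (Fin 2) ℤ, Q = actQF γ Q₀}) :
    (∀ z : ℂ, 0 < z.im → ¬ IsCMA A z →
      Summable (fun Q : {Q : ℤ × ℤ × ℤ // Q ∈ A ∧ 0 < Q.1} => ‖qpoly Q.1 z ^ (-(k : ℤ))‖)) ∧
    (∀ γ : Matrix.SpecialLinearGroup (Fin 2) ℤ, ∀ z : ℂ, 0 < z.im → ¬ IsCMA A z →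
      fkDA k A (mob γ z)
        = ((γ.1 1 0 : ℂ) * z + (γ.1 1 1 : ℂ)) ^ (2 * k) * fkDA k A z) := by
  obtain ⟨Q₀, hQ₀, hAdef⟩ := hA
  constructor
  · intro z hz hcm
    exact part1 hD hQ₀ hAdef hk hz hcm
  · intro γ z hz hcm
    exact part2 hD hQ₀ hAdef k γ z hz
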